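/- Let F be a symmetric set-function (F(A) = F(V∖A) for all A) with F(∅)=0. Then its Lovász extension f is an even function: f(−w) = f(w) for all w ∈ ℝ^p. -/

import Mathlib

open Finset

/-- The Lovász extension of a set-function `F`, defined via a nondecreasing
ordering `σ = Tuple.sort w` of the components of `w`. -/
noncomputable def lovasz {p : ℕ} (F : Finset (Fin p) → ℝ) (w : Fin p → ℝ) : ℝ :=
  ∑ k : Fin p, w (Tuple.sort w k) *
    (F ((Finset.Ici k).image (Tuple.sort w)) - F ((Finset.Ioi k).image (Tuple.sort w)))

/-- sorted values extended to ℕ -/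
noncomputable def vext {p : ℕ} (w : Fin p → ℝ) (σ : Equiv.Perm (Fin p)) (n : ℕ) : ℝ :=
  if h : n < p then w (σ ⟨n, h⟩) else 0

lemma abel_aux (v G : ℕ → ℝ) (n : ℕ) :
    ∑ k ∈ Finset.range (n+1), v k * (G k - G (k+1))
      = v 0 * G 0 - v n * G (n+1) + ∑ k ∈ Finset.range n, (v (k+1) - v k) * G (k+1) := by
  induction n with
  | zero => simp; ring
  | succ n ih => rw [Finset.sum_range_succ, ih, Finset.sum_range_succ]; ring

/-- strict level set description of upper images -/
lemma image_filter_eq {p : ℕ} (w : Fin p → ℝ) (σ : Equiv.Perm (Fin p))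
    (hm : Monotone (w ∘ σ)) {k : ℕ} (hk : k < p) (hk1 : k + 1 < p)
    (hlt : w (σ ⟨k, hk⟩) < w (σ ⟨k+1, hk1⟩)) :
    (Finset.univ.filter (fun j : Fin p => k + 1 ≤ (j : ℕ))).image σ
      = Finset.univ.filter (fun i => w (σ ⟨k, hk⟩) < w i) := by
  ext i
  simp only [Finset.mem_image, Finset.mem_filter, Finset.mem_univ, true_and]
  constructor
  · rintro ⟨j, hj, rfl⟩
    exact lt_of_lt_of_le hlt (hm (show (⟨k+1, hk1⟩ : Fin p) ≤ j from hj))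
  · intro hi
    refine ⟨σ⁻¹ i, ?_, by simp⟩
    by_contra h
    push_neg at h
    have hle : σ⁻¹ i ≤ (⟨k, hk⟩ : Fin p) := Fin.mk_le_of_le_val (Nat.lt_succ_iff.mp h)
    have h2 := hm hle
    simp only [Function.comp_apply, Equiv.Perm.coe_inv, Equiv.apply_symm_apply] at h2
    exact absurd hi (not_lt.mpr h2)

lemma filter_strict_eq {p : ℕ} (w : Fin p → ℝ) (σ : Equiv.Perm (Fin p))
    (hm : Monotone (w ∘ σ)) {k : ℕ} (hk : k < p) (hk1 : k + 1 < p)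
    (hlt : w (σ ⟨k, hk⟩) < w (σ ⟨k+1, hk1⟩)) :
    (Finset.univ.filter (fun i => w (σ ⟨k+1, hk1⟩) ≤ w i))
      = Finset.univ.filter (fun i => w (σ ⟨k, hk⟩) < w i) := by
  ext i
  simp only [Finset.mem_filter, Finset.mem_univ, true_and]
  constructor
  · intro hi; exact lt_of_lt_of_le hlt hi
  · intro hi
    rcases le_or_gt (k+1) ((σ⁻¹ i : Fin p) : ℕ) with h | h
    · have h2 := hm (show (⟨k+1, hk1⟩ : Fin p) ≤ σ⁻¹ i from h)
      simpa only [Function.comp_apply, Equiv.Perm.coe_inv, Equiv.apply_symm_apply] using h2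
    · have hle : σ⁻¹ i ≤ (⟨k, hk⟩ : Fin p) := Fin.mk_le_of_le_val (Nat.lt_succ_iff.mp h)
      have h2 := hm hle
      simp only [Function.comp_apply, Equiv.Perm.coe_inv, Equiv.apply_symm_apply] at h2
      exact absurd hi (not_lt.mpr h2)

/-- Key lemma: the Lovász-type sum for a monotone sorting permutation equals a
sum over strict level sets, depending on the permutation only through sorted values. -/
lemma S_eq {p : ℕ} (F : Finset (Fin p) → ℝ) (hu : F Finset.univ = 0) (h0 : F ∅ = 0)
    (w : Fin p → ℝ) (σ : Equiv.Perm (Fin p)) (hm : Monotone (w ∘ σ)) :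
    (∑ k : Fin p, w (σ k) * (F ((Finset.Ici k).image σ) - F ((Finset.Ioi k).image σ)))
    = ∑ k ∈ Finset.range (p-1), (vext w σ (k+1) - vext w σ k) *
        F (Finset.univ.filter (fun i => vext w σ k < w i)) := by
  rcases Nat.eq_zero_or_pos p with rfl | hp
  · simp
  obtain ⟨n, rfl⟩ : ∃ n, p = n + 1 := ⟨p - 1, (Nat.succ_pred_eq_of_pos hp).symm⟩
  clear hp
  set G : ℕ → ℝ :=
    fun m => F (((Finset.univ.filter (fun j : Fin (n+1) => m ≤ (j:ℕ)))).image σ) with hG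
  have hIci : ∀ k : Fin (n+1), (Finset.Ici k).image σ
      = ((Finset.univ.filter (fun j : Fin (n+1) => (k:ℕ) ≤ (j:ℕ)))).image σ := by
    intro k; congr 1; ext j
    simp only [Finset.mem_Ici, Finset.mem_filter, Finset.mem_univ, true_and]
    exact Fin.le_def
  have hIoi : ∀ k : Fin (n+1), (Finset.Ioi k).image σ
      = ((Finset.univ.filter (fun j : Fin (n+1) => (k:ℕ)+1 ≤ (j:ℕ)))).image σ := by
    intro k; congr 1; ext j
    simp only [Finset.mem_Ioi, Finset.mem_filter, Finset.mem_univ, true_and]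
    rw [Fin.lt_def]
    omega
  have hL : (∑ k : Fin (n+1), w (σ k) * (F ((Finset.Ici k).image σ) - F ((Finset.Ioi k).image σ)))
      = ∑ k ∈ Finset.range (n+1), vext w σ k * (G k - G (k+1)) := by
    rw [← Fin.sum_univ_eq_sum_range (fun k => vext w σ k * (G k - G (k+1))) (n+1)]
    apply Finset.sum_congr rfl
    intro k _
    rw [hIci k, hIoi k]
    simp only [hG, vext, dif_pos k.isLt, Fin.eta]
  rw [hL, abel_aux (vext w σ) G n]
  have hG0 : G 0 = 0 := by
    have h1 : (Finset.univ.filter (fun j : Fin (n+1) => 0 ≤ (j:ℕ))) = Finset.univ := by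
      ext j; simp
    have himg : (Finset.univ : Finset (Fin (n+1))).image σ = Finset.univ := by
      ext i; simp only [Finset.mem_image, Finset.mem_univ, true_and, iff_true]
      exact ⟨σ⁻¹ i, by simp⟩
    rw [hG]; simp only [h1, himg]; exact hu
  have hGp : G (n+1) = 0 := by
    have h1 : (Finset.univ.filter (fun j : Fin (n+1) => n+1 ≤ (j:ℕ))) = ∅ := by
      ext j; simp only [Finset.mem_filter, Finset.mem_univ, true_and, Finset.notMem_empty,
        iff_false, not_le]
      exact j.isLt
    rw [hG]; simp only [h1]; simpa using h0
  rw [hG0, hGp]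
  simp only [mul_zero, sub_zero, zero_add, Nat.add_sub_cancel]
  apply Finset.sum_congr rfl
  intro k hk
  rw [Finset.mem_range] at hk
  have hk1 : k + 1 < n + 1 := by omega
  have hkp : k < n + 1 := by omega
  rcases eq_or_lt_of_le (hm (show (⟨k, hkp⟩ : Fin (n+1)) ≤ ⟨k+1, hk1⟩ from
      Fin.mk_le_mk.mpr (Nat.le_succ k))) with heq | hlt
  · simp only [Function.comp_apply] at heq
    have hz : vext w σ (k+1) - vext w σ k = 0 := by
      simp only [vext, dif_pos hk1, dif_pos hkp]
      rw [← heq]; ring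
    rw [hz, zero_mul, zero_mul]
  · simp only [Function.comp_apply] at hlt
    congr 1
    simp only [hG, vext, dif_pos hkp]
    exact congrArg F (image_filter_eq w σ hm hkp hk1 hlt)

theorem lovasz_even_of_symmetric {p : ℕ} (F : Finset (Fin p) → ℝ) (h0 : F ∅ = 0)
    (hsym : ∀ A : Finset (Fin p), F A = F (Finset.univ \ A)) :
    ∀ w : Fin p → ℝ, lovasz F (fun i => -w i) = lovasz F w := by
  intro w
  have hu : F Finset.univ = 0 := by
    rw [hsym Finset.univ, Finset.sdiff_self]; exact h0
  set w' : Fin p → ℝ := fun i => -w i with hw'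
  set σ : Equiv.Perm (Fin p) := Tuple.sort w with hσ
  set τ : Equiv.Perm (Fin p) := Tuple.sort w' with hτ
  have hmσ : Monotone (w ∘ σ) := Tuple.monotone_sort w
  have hmτ : Monotone (w' ∘ τ) := Tuple.monotone_sort w'
  -- relation between τ and σ through reversal
  have hrel : ∀ k : Fin p, w (τ k) = w (σ k.rev) := by
    have hmono : Monotone (w ∘ ((Fin.revPerm).trans τ)) := by
      intro a b hab
      have h2 : (w' ∘ τ) b.rev ≤ (w' ∘ τ) a.rev := hmτ (Fin.rev_le_rev.mpr hab)
      simp only [Function.comp_apply, hw'] at h2 ⊢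
      simp only [Equiv.trans_apply, Fin.revPerm_apply]
      linarith
    have hcomp := Tuple.comp_sort_eq_comp_iff_monotone.mpr hmono
    rw [← hσ] at hcomp
    intro k
    have h2 := congrFun hcomp k.rev
    simp only [Function.comp_apply, Equiv.trans_apply, Fin.revPerm_apply, Fin.rev_rev] at h2
    exact h2
  have e1 : lovasz F w' = ∑ k ∈ Finset.range (p-1), (vext w' τ (k+1) - vext w' τ k) *
      F (Finset.univ.filter (fun i => vext w' τ k < w' i)) := by
    unfold lovasz
    exact S_eq F hu h0 w' τ hmτ
  have e2 : lovasz F w = ∑ k ∈ Finset.range (p-1), (vext w σ (k+1) - vext w σ k) *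
      F (Finset.univ.filter (fun i => vext w σ k < w i)) := by
    unfold lovasz
    exact S_eq F hu h0 w σ hmσ
  rw [e1, e2]
  have hval : ∀ m (hm' : m < p), vext w' τ m = -(vext w σ (p - 1 - m)) := by
    intro m hm'
    have h1 : p - 1 - m < p := by omega
    simp only [vext, dif_pos hm', dif_pos h1, hw']
    have h3 : w (τ ⟨m, hm'⟩) = w (σ (⟨m, hm'⟩ : Fin p).rev) := hrel _
    have h4 : (⟨m, hm'⟩ : Fin p).rev = ⟨p - 1 - m, h1⟩ := by
      apply Fin.ext; simp [Fin.val_rev]; omega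
    rw [h3, h4]
  set g : ℕ → ℝ := fun j => (vext w σ (j+1) - vext w σ j) *
      F (Finset.univ.filter (fun i => vext w σ (j+1) ≤ w i)) with hg
  have hLHS : ∑ k ∈ Finset.range (p-1), (vext w' τ (k+1) - vext w' τ k) *
        F (Finset.univ.filter (fun i => vext w' τ k < w' i))
      = ∑ k ∈ Finset.range (p-1), g ((p-1) - 1 - k) := by
    apply Finset.sum_congr rfl
    intro k hk
    rw [Finset.mem_range] at hk
    have hkp : k < p := by omega
    have hk1p : k + 1 < p := by omega
    have e3 : (p-1) - 1 - k + 1 = p - 1 - k := by omega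
    have e4 : (p-1) - 1 - k = p - 1 - (k+1) := by omega
    have hFset : F (Finset.univ.filter (fun i => vext w' τ k < w' i))
        = F (Finset.univ.filter (fun i => vext w σ (p - 1 - k) ≤ w i)) := by
      have hset : (Finset.univ.filter (fun i => vext w' τ k < w' i))
          = Finset.univ.filter (fun i => ¬ (vext w σ (p - 1 - k) ≤ w i)) := by
        apply Finset.filter_congr
        intro i _
        rw [hval k hkp]
        simp only [hw', not_le]
        constructor
        · intro h; linarith
        · intro h; linarith
      rw [hset, Finset.filter_not, ← hsym]
    simp only [hg]
    rw [e3, e4, hFset, hval (k+1) hk1p, hval k hkp]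
    ring
  rw [hLHS, Finset.sum_range_reflect g (p-1)]
  apply Finset.sum_congr rfl
  intro k hk
  rw [Finset.mem_range] at hk
  have hkp : k < p := by omega
  have hk1p : k + 1 < p := by omega
  simp only [hg]
  rcases eq_or_lt_of_le (hmσ (show (⟨k, hkp⟩ : Fin p) ≤ ⟨k+1, hk1p⟩ from
      Fin.mk_le_mk.mpr (Nat.le_succ k))) with heq | hlt
  · simp only [Function.comp_apply] at heq
    have hz : vext w σ (k+1) - vext w σ k = 0 := by
      simp only [vext, dif_pos hk1p, dif_pos hkp]; rw [← heq]; ring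
    rw [hz, zero_mul, zero_mul]
  · simp only [Function.comp_apply] at hlt
    congr 1
    simp only [vext, dif_pos hk1p, dif_pos hkp]
    exact congrArg F (filter_strict_eq w σ hmσ hkp hk1p hlt)
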